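/- For every real α ≥ 0 and integers N_T ≥ N_R ≥ 1, the single-cell maximum DoF functions of Theorem 4.1 satisfy d*_MMSE(α) ≥ d*_MF/AS(α), with equality if and only if N_R = 1 or α ≥ N_T − 1. Moreover d*_MMSE(α) = N_T if and only if α ≥ N_T − N_R, and d*_MF/AS(α) = N_T if and only if α ≥ N_T − 1. -/
import Mathlib


open Finset

set_option maxHeartbeats 1000000 in
/-- The DoF gain of the MMSE receiver over MF/AS receivers (Theorem 4.1 and
Proposition 4.2 of the paper). -/
theorem stmt_16 (NT NR : ℕ) (hNR : 1 ≤ NR) (hNRT : NR ≤ NT)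
    (α : ℝ) (hα : 0 ≤ α)
    (dMMSE dMF : ℝ → ℕ → ℝ)
    (hdMMSE : ∀ (a : ℝ) (M : ℕ), dMMSE a M =
      if NR < M ∧ a ≤ (M : ℝ) - NR then a * M / ((M : ℝ) - NR) else M)
    (hdMF : ∀ (a : ℝ) (M : ℕ), dMF a M =
      if 2 ≤ M ∧ a ≤ (M : ℝ) - 1 then a * M / ((M : ℝ) - 1) else M)
    (dsMMSE dsMF : ℝ)
    (hsMMSE : dsMMSE = (Finset.Icc 1 NT).sup'
      (Finset.nonempty_Icc.2 (le_trans hNR hNRT)) (fun M => dMMSE α M))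
    (hsMF : dsMF = (Finset.Icc 1 NT).sup'
      (Finset.nonempty_Icc.2 (le_trans hNR hNRT)) (fun M => dMF α M)) :
    dsMF ≤ dsMMSE ∧
    (dsMMSE = dsMF ↔ (NR = 1 ∨ (NT : ℝ) - 1 ≤ α)) ∧
    (dsMMSE = (NT : ℝ) ↔ (NT : ℝ) - NR ≤ α) ∧
    (dsMF = (NT : ℝ) ↔ (NT : ℝ) - 1 ≤ α) := by
  have hne : (Finset.Icc 1 NT).Nonempty := Finset.nonempty_Icc.2 (le_trans hNR hNRT)
  have hNRr : (1:ℝ) ≤ NR := by exact_mod_cast hNR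
  have hNTr : (NR:ℝ) ≤ NT := by exact_mod_cast hNRT
  -- pointwise upper bounds
  have hMMSE_le : ∀ M : ℕ, dMMSE α M ≤ M := by
    intro M
    rw [hdMMSE]
    split
    · rename_i h
      obtain ⟨h1, h2⟩ := h
      have hd : (0:ℝ) < (M:ℝ) - NR := by
        have : (NR:ℝ) < M := by exact_mod_cast h1
        linarith
      rw [div_le_iff₀ hd]
      nlinarith [Nat.cast_nonneg (α := ℝ) M]
    · exact le_refl _
  have hMF_le : ∀ M : ℕ, dMF α M ≤ M := by
    intro M
    rw [hdMF]
    split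
    · rename_i h
      obtain ⟨h1, h2⟩ := h
      have hd : (0:ℝ) < (M:ℝ) - 1 := by
        have : (2:ℝ) ≤ M := by exact_mod_cast h1
        linarith
      rw [div_le_iff₀ hd]
      nlinarith [Nat.cast_nonneg (α := ℝ) M]
    · exact le_refl _
  -- pointwise comparison
  have hpt : ∀ M : ℕ, dMF α M ≤ dMMSE α M := by
    intro M
    rw [hdMMSE]
    split
    · rename_i h
      obtain ⟨h1, h2⟩ := h
      have hM2 : 2 ≤ M := by omega
      have hd : (0:ℝ) < (M:ℝ) - NR := by
        have : (NR:ℝ) < M := by exact_mod_cast h1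
        linarith
      have hd1 : (0:ℝ) < (M:ℝ) - 1 := by
        have : (2:ℝ) ≤ M := by exact_mod_cast hM2
        linarith
      rw [hdMF]
      rw [if_pos ⟨hM2, by linarith⟩]
      apply div_le_div_of_nonneg_left _ hd (by linarith)
      positivity
    · exact hMF_le M
  -- upper bounds for the sups
  have hsupMMSE_le : dsMMSE ≤ NT := by
    rw [hsMMSE]
    apply Finset.sup'_le
    intro M hM
    have : M ≤ NT := (Finset.mem_Icc.1 hM).2
    exact le_trans (hMMSE_le M) (by exact_mod_cast this)
  have hsupMF_le : dsMF ≤ NT := by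
    rw [hsMF]
    apply Finset.sup'_le
    intro M hM
    have : M ≤ NT := (Finset.mem_Icc.1 hM).2
    exact le_trans (hMF_le M) (by exact_mod_cast this)
  have hNTmem : NT ∈ Finset.Icc 1 NT := Finset.mem_Icc.2 ⟨le_trans hNR hNRT, le_refl NT⟩
  -- part 1
  have part1 : dsMF ≤ dsMMSE := by
    rw [hsMF, hsMMSE]
    apply Finset.sup'_le
    intro M hM
    exact le_trans (hpt M) (Finset.le_sup' _ hM)
  -- sup = NT iff value at NT is NT
  have hsup_iffMMSE : dsMMSE = NT ↔ dMMSE α NT = NT := by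
    constructor
    · intro h
      obtain ⟨M0, hM0, hEq⟩ := Finset.exists_mem_eq_sup' hne (fun M => dMMSE α M)
      have h1 : (NT:ℝ) = dMMSE α M0 := by rw [← h, hsMMSE, hEq]
      have h2 : (M0:ℝ) ≤ NT := by exact_mod_cast (Finset.mem_Icc.1 hM0).2
      have h3 : dMMSE α M0 ≤ M0 := hMMSE_le M0
      have : (M0:ℝ) = NT := by linarith
      have hM0NT : M0 = NT := by exact_mod_cast this
      rw [← hM0NT, ← h1, hM0NT]
    · intro h
      refine le_antisymm hsupMMSE_le ?_
      rw [hsMMSE]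
      calc (NT:ℝ) = dMMSE α NT := h.symm
        _ ≤ _ := Finset.le_sup' _ hNTmem
  have hsup_iffMF : dsMF = NT ↔ dMF α NT = NT := by
    constructor
    · intro h
      obtain ⟨M0, hM0, hEq⟩ := Finset.exists_mem_eq_sup' hne (fun M => dMF α M)
      have h1 : (NT:ℝ) = dMF α M0 := by rw [← h, hsMF, hEq]
      have h2 : (M0:ℝ) ≤ NT := by exact_mod_cast (Finset.mem_Icc.1 hM0).2
      have h3 : dMF α M0 ≤ M0 := hMF_le M0
      have : (M0:ℝ) = NT := by linarith
      have hM0NT : M0 = NT := by exact_mod_cast this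
      rw [← hM0NT, ← h1, hM0NT]
    · intro h
      refine le_antisymm hsupMF_le ?_
      rw [hsMF]
      calc (NT:ℝ) = dMF α NT := h.symm
        _ ≤ _ := Finset.le_sup' _ hNTmem
  -- value at NT characterization
  have part3 : dsMMSE = NT ↔ (NT:ℝ) - NR ≤ α := by
    rw [hsup_iffMMSE, hdMMSE]
    split
    · rename_i h
      obtain ⟨h1, h2⟩ := h
      have hd : (0:ℝ) < (NT:ℝ) - NR := by
        have : (NR:ℝ) < NT := by exact_mod_cast h1
        linarith
      rw [div_eq_iff (ne_of_gt hd)]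
      constructor
      · intro heq
        have hNT0 : (0:ℝ) < NT := by linarith
        nlinarith
      · intro hle
        have : α = (NT:ℝ) - NR := le_antisymm h2 hle
        rw [this]; ring
    · rename_i h
      constructor
      · intro _
        rcases Nat.lt_or_ge NR NT with hlt | hge
        · have : ¬ (α ≤ (NT:ℝ) - NR) := by
            intro hc; exact h ⟨hlt, hc⟩
          linarith
        · have : (NT:ℝ) ≤ NR := by exact_mod_cast hge
          linarith
      · intro _; rfl
  have part4 : dsMF = NT ↔ (NT:ℝ) - 1 ≤ α := by
    rw [hsup_iffMF, hdMF]
    split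
    · rename_i h
      obtain ⟨h1, h2⟩ := h
      have hd : (0:ℝ) < (NT:ℝ) - 1 := by
        have : (2:ℝ) ≤ NT := by exact_mod_cast h1
        linarith
      rw [div_eq_iff (ne_of_gt hd)]
      constructor
      · intro heq
        have hNT0 : (0:ℝ) < NT := by linarith
        nlinarith
      · intro hle
        have : α = (NT:ℝ) - 1 := le_antisymm h2 hle
        rw [this]; ring
    · rename_i h
      constructor
      · intro _
        rcases Nat.lt_or_ge NT 2 with hlt | hge
        · have : NT = 1 := by omega
          rw [this]; norm_num; exact hα
        · have : ¬ (α ≤ (NT:ℝ) - 1) := by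
            intro hc; exact h ⟨hge, hc⟩
          linarith
      · intro _; rfl
  refine ⟨part1, ?_, part3, part4⟩
  constructor
  · -- forward: equality forces NR = 1 or α ≥ NT - 1
    intro heq
    by_contra hcon
    push_neg at hcon
    obtain ⟨hNR1, hαlt⟩ := hcon
    have hNR2 : 2 ≤ NR := by omega
    -- dsMF < NT
    have hMFltNT : dsMF < (NT:ℝ) :=
      lt_of_le_of_ne hsupMF_le (fun h => absurd (part4.1 h) (not_le.2 hαlt))
    obtain ⟨m, hm, hEq⟩ := Finset.exists_mem_eq_sup' hne (fun M => dMF α M)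
    obtain ⟨hm1, hmNT⟩ := Finset.mem_Icc.1 hm
    have hdsm : dsMF = dMF α m := by rw [hsMF, hEq]
    have hkey : ∃ M' ∈ Finset.Icc 1 NT, dsMF < dMMSE α M' := by
      rw [hdsm] at hMFltNT ⊢
      rw [hdMF] at hMFltNT ⊢
      by_cases hc : 2 ≤ m ∧ α ≤ (m:ℝ) - 1
      · -- ratio branch at m
        rw [if_pos hc] at hMFltNT ⊢
        obtain ⟨hm2, hαm⟩ := hc
        have hm2r : (2:ℝ) ≤ m := by exact_mod_cast hm2
        have hd1 : (0:ℝ) < (m:ℝ) - 1 := by linarith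
        -- α > 0
        have hαpos : 0 < α := by
          rcases lt_or_eq_of_le hα with h | h
          · exact h
          have h1mem : 1 ∈ Finset.Icc 1 NT := Finset.mem_Icc.2 ⟨le_refl 1, le_trans hNR hNRT⟩
          have hle1 : dMF α 1 ≤ dsMF := by
            rw [hsMF]; exact Finset.le_sup' _ h1mem
          rw [hdMF, if_neg (by norm_num), hdsm, hdMF, if_pos ⟨hm2, hαm⟩, ← h] at hle1
          rw [zero_mul, zero_div] at hle1
          norm_num at hle1
        by_cases hfit : m + (NR - 1) ≤ NT
        · -- use M' = m + NR - 1
          refine ⟨m + (NR - 1), Finset.mem_Icc.2 ⟨by omega, hfit⟩, ?_⟩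
          rw [hdMMSE]
          have hcast : ((m + (NR - 1) : ℕ) : ℝ) = (m:ℝ) + (NR:ℝ) - 1 := by
            push_cast [Nat.cast_sub hNR]
            ring
          have hlt : NR < m + (NR - 1) := by omega
          have hle : α ≤ ((m + (NR - 1) : ℕ) : ℝ) - NR := by
            rw [hcast]; linarith
          rw [if_pos ⟨hlt, hle⟩, hcast]
          have hden : (m:ℝ) + (NR:ℝ) - 1 - NR = (m:ℝ) - 1 := by ring
          rw [hden, div_lt_div_iff₀ hd1 hd1]
          have hNR2r : (2:ℝ) ≤ NR := by exact_mod_cast hNR2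
          nlinarith [mul_pos (mul_pos hαpos hd1) (show (0:ℝ) < (NR:ℝ) - 1 by linarith)]
        · -- use M' = NT
          refine ⟨NT, hNTmem, ?_⟩
          have hmlarge : NT + 2 ≤ m + NR := by omega
          rw [hdMMSE]
          by_cases hc2 : NR < NT ∧ α ≤ (NT:ℝ) - NR
          · rw [if_pos hc2]
            obtain ⟨hlt, hle⟩ := hc2
            have hdNT : (0:ℝ) < (NT:ℝ) - NR := by
              have : (NR:ℝ) < NT := by exact_mod_cast hlt
              linarith
            rw [div_lt_div_iff₀ hd1 hdNT]
            have hNR2r : (2:ℝ) ≤ NR := by exact_mod_cast hNR2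
            have hmlr : (NT:ℝ) + 2 ≤ (m:ℝ) + NR := by exact_mod_cast hmlarge
            have hnatr : (NT:ℝ) < (m:ℝ) * NR := by
              nlinarith [mul_nonneg (by linarith : (0:ℝ) ≤ (m:ℝ) - 1) (by linarith : (0:ℝ) ≤ (NR:ℝ) - 1)]
            nlinarith
          · rw [if_neg hc2]
            -- α * m / (m - 1) < NT
            rw [div_lt_iff₀ hd1]
            have hmNTr : (m:ℝ) ≤ NT := by exact_mod_cast hmNT
            rcases eq_or_lt_of_le hαm with heqa | hlta
            · have : (m:ℝ) < NT := by linarith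
              nlinarith
            · nlinarith
      · -- else branch at m : value m, use M' = m + 1
        rw [if_neg hc] at hMFltNT ⊢
        have hmlt : m < NT := by exact_mod_cast hMFltNT
        refine ⟨m + 1, Finset.mem_Icc.2 ⟨by omega, by omega⟩, ?_⟩
        rw [hdMMSE]
        by_cases hc2 : NR < m + 1 ∧ α ≤ ((m+1:ℕ):ℝ) - NR
        · obtain ⟨hlt, hle⟩ := hc2
          rw [if_pos ⟨hlt, hle⟩]
          have hm2 : 2 ≤ m := by omega
          push_neg at hc
          have hαgt : (m:ℝ) - 1 < α := hc hm2
          have hdd : (0:ℝ) < ((m+1:ℕ):ℝ) - NR := by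
            have : (NR:ℝ) < (m+1:ℕ) := by exact_mod_cast hlt
            linarith
          rw [lt_div_iff₀ hdd]
          have hm2r : (2:ℝ) ≤ m := by exact_mod_cast hm2
          have hNR2r : (2:ℝ) ≤ NR := by exact_mod_cast hNR2
          have hcast : ((m+1:ℕ):ℝ) = (m:ℝ) + 1 := by push_cast; ring
          rw [hcast] at hdd ⊢
          nlinarith
        · rw [if_neg hc2]
          have : (m:ℝ) < ((m+1:ℕ):ℝ) := by exact_mod_cast Nat.lt_succ_self m
          linarith
    obtain ⟨M', hM', hlt⟩ := hkey
    have : dMMSE α M' ≤ dsMMSE := by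
      rw [hsMMSE]; exact Finset.le_sup' _ hM'
    linarith [heq ▸ this]
  · -- backward
    rintro (hNR1 | hge)
    · -- NR = 1 : the functions agree
      subst hNR1
      rw [hsMMSE, hsMF]
      apply Finset.sup'_congr hne rfl
      intro M hM
      rw [hdMMSE, hdMF]
      have : (1 < M ∧ α ≤ (M:ℝ) - (1:ℕ)) ↔ (2 ≤ M ∧ α ≤ (M:ℝ) - 1) := by
        constructor
        · rintro ⟨h1, h2⟩; exact ⟨h1, by push_cast at h2 ⊢; linarith⟩
        · rintro ⟨h1, h2⟩; exact ⟨h1, by push_cast; linarith⟩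
      simp only [Nat.cast_one] at *
      by_cases hcc : 2 ≤ M ∧ α ≤ (M:ℝ) - 1
      · rw [if_pos (this.2 hcc), if_pos hcc]
      · rw [if_neg (fun h => hcc (this.1 h)), if_neg hcc]
    · have h3 : dsMMSE = NT := part3.2 (by linarith)
      have h4 : dsMF = NT := part4.2 hge
      rw [h3, h4]
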